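/- The nonsymmetric Catalan function satisfies the removable-root recurrence: if Ψ is a root ideal in Δ⁺_ℓ, α is a removable root of Ψ (i.e., Ψ∖{α} is still a root ideal), γ ∈ Z^ℓ, and w is in the 0-Hecke monoid of S_ℓ, then H(Ψ; γ; w) = H(Ψ∖{α}; γ; w) + q·H(Ψ; γ + ε_α; w), where ε_{(i,j)} = e_i − e_j. -/

import Mathlib

open MvPolynomial

noncomputable section

abbrev Kf (ℓ : ℕ) : Type := FractionRing (MvPolynomial (Fin ℓ) ℤ)

noncomputable def Xv (ℓ : ℕ) (i : ℕ) : Kf ℓ :=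
  if h : i < ℓ then algebraMap (MvPolynomial (Fin ℓ) ℤ) (Kf ℓ) (X ⟨i, h⟩) else 1

noncomputable def swapAlg (ℓ i : ℕ) :
    MvPolynomial (Fin ℓ) ℤ ≃ₐ[ℤ] MvPolynomial (Fin ℓ) ℤ :=
  if h : i + 1 < ℓ then
    renameEquiv ℤ (Equiv.swap ⟨i, Nat.lt_of_succ_lt h⟩ ⟨i + 1, h⟩)
  else AlgEquiv.refl

noncomputable def swapK (ℓ i : ℕ) : Kf ℓ →+* Kf ℓ :=
  IsFractionRing.lift (g := (algebraMap (MvPolynomial (Fin ℓ) ℤ) (Kf ℓ)).comp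
      (swapAlg ℓ i).toAlgHom.toRingHom)
    (by rw [RingHom.coe_comp]
        exact (IsFractionRing.injective _ _).comp (swapAlg ℓ i).injective)

noncomputable def dem (ℓ i : ℕ) (f : Kf ℓ) : Kf ℓ :=
  (Xv ℓ i * f - Xv ℓ (i + 1) * swapK ℓ i f) / (Xv ℓ i - Xv ℓ (i + 1))

noncomputable def monK (ℓ : ℕ) (α : Fin ℓ → ℤ) : Kf ℓ := ∏ i : Fin ℓ, Xv ℓ i ^ α i

def swapVec (ℓ i : ℕ) (α : Fin ℓ → ℤ) : Fin ℓ → ℤ :=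
  if h : i + 1 < ℓ then α ∘ Equiv.swap ⟨i, Nat.lt_of_succ_lt h⟩ ⟨i + 1, h⟩ else α

def ascAt (ℓ : ℕ) (α : Fin ℓ → ℤ) (i : ℕ) : Prop :=
  ∃ h : i + 1 < ℓ, α ⟨i, Nat.lt_of_succ_lt h⟩ < α ⟨i + 1, h⟩

instance (ℓ : ℕ) (α : Fin ℓ → ℤ) (i : ℕ) : Decidable (ascAt ℓ α i) := by
  unfold ascAt; infer_instance

/-- The key polynomial computed with the given amount of fuel: repeatedly pick an
ascent `i` of `α` (a position with `α i < α (i+1)`) and use `κ_α = π_i κ_{s_i α}`;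
for antitone `α`, `κ_α = x^α`. -/
noncomputable def keyAux (ℓ : ℕ) : ℕ → (Fin ℓ → ℤ) → Kf ℓ
  | 0, α => monK ℓ α
  | n + 1, α =>
    if h : ∃ i : Fin ℓ, ascAt ℓ α (i : ℕ) then
      dem ℓ (h.choose : ℕ) (keyAux ℓ n (swapVec ℓ (h.choose : ℕ) α))
    else monK ℓ α

/-- The key polynomial `κ_α = π_{p(α)} x^{α⁺}`, `α ∈ ℤ^ℓ`, as an element of the
fraction field; fuel `ℓ * ℓ` always suffices. -/
noncomputable def keyPoly (ℓ : ℕ) (α : Fin ℓ → ℤ) : Kf ℓ := keyAux ℓ (ℓ * ℓ) α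

/-- A finite ℤ-linear combination of key polynomials. -/
noncomputable def keyComb (ℓ : ℕ) (c : (Fin ℓ → ℤ) →₀ ℤ) : Kf ℓ :=
  c.sum fun α k => k • keyPoly ℓ α

/-- The positive (polynomial) part of a ℤ-linear combination of key polynomials:
only the terms `κ_α` with `α ∈ ℤ_{≥0}^ℓ` are kept. -/
noncomputable def keyCombPos (ℓ : ℕ) (c : (Fin ℓ → ℤ) →₀ ℤ) : Kf ℓ :=
  c.sum fun α k => if ∀ i, 0 ≤ α i then k • keyPoly ℓ α else 0


open Classical in
/-- Polynomial truncation on the Laurent ring: expand `f` in the key-polynomial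
basis and keep exactly the terms `κ_α` with `α ∈ ℤ_{≥0}^ℓ` (junk value `0` off
the Laurent ring). -/
noncomputable def polyTrunc (ℓ : ℕ) (f : Kf ℓ) : Kf ℓ :=
  if h : ∃ c : (Fin ℓ → ℤ) →₀ ℤ, keyComb ℓ c = f then keyCombPos ℓ h.choose else 0

/-- `π_w` for a word `w = [i₁, …, i_m]` in the 0-Hecke monoid of `S_ℓ`:
`π_{i₁} ∘ ⋯ ∘ π_{i_m}`. -/
noncomputable def demWord (ℓ : ℕ) (w : List ℕ) (f : Kf ℓ) : Kf ℓ :=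
  w.foldr (fun i g => dem ℓ i g) f

/-- The generating series `∏_{(i,j) ∈ Ψ} (1 - q x_i/x_j)⁻¹ · x^γ`, a power series
in `q` with Laurent-polynomial coefficients; each factor is expanded as the
geometric series `∑_n q^n (x_i/x_j)^n`. -/
noncomputable def catSeries (ℓ : ℕ) (Ψ : Finset (Fin ℓ × Fin ℓ)) (γ : Fin ℓ → ℤ) :
    PowerSeries (Kf ℓ) :=
  (∏ p ∈ Ψ, PowerSeries.mk fun n => (Xv ℓ (p.1 : ℕ) / Xv ℓ (p.2 : ℕ)) ^ n) *
    PowerSeries.C (monK ℓ γ)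

/-- The nonsymmetric Catalan function
`H(Ψ; γ; w) = π_w (poly (∏_{(i,j) ∈ Ψ} (1 - q x_i/x_j)⁻¹ x^γ))`, with `poly` and
`π_w` applied coefficient-wise in `q`. -/
noncomputable def HCat (ℓ : ℕ) (Ψ : Finset (Fin ℓ × Fin ℓ)) (γ : Fin ℓ → ℤ)
    (w : List ℕ) : PowerSeries (Kf ℓ) :=
  PowerSeries.mk fun n =>
    demWord ℓ w (polyTrunc ℓ (PowerSeries.coeff n (catSeries ℓ Ψ γ)))

/-- A root ideal: an upper order ideal of `Δ⁺_ℓ = {(i,j) : i < j}` for the order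
`(a,b) ≤ (c,d) ⟺ a ≥ c ∧ b ≤ d`. -/
def IsRootIdeal (ℓ : ℕ) (Ψ : Finset (Fin ℓ × Fin ℓ)) : Prop :=
  (∀ p ∈ Ψ, p.1 < p.2) ∧
    ∀ p ∈ Ψ, ∀ q : Fin ℓ × Fin ℓ, q.1 ≤ p.1 → p.2 ≤ q.2 → q ∈ Ψ


namespace hidden_dummy
end hidden_dummy

namespace NSCat

lemma Xv_ne_zero (ℓ i : ℕ) : Xv ℓ i ≠ 0 := by
  unfold Xv
  split
  · rename_i h
    intro he
    have : (X (⟨i, h⟩ : Fin ℓ) : MvPolynomial (Fin ℓ) ℤ) = 0 :=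
      (IsFractionRing.injective (MvPolynomial (Fin ℓ) ℤ) (Kf ℓ)) (by simpa using he)
    exact MvPolynomial.X_ne_zero _ this
  · exact one_ne_zero

lemma Xv_fin (ℓ : ℕ) (j : Fin ℓ) :
    Xv ℓ (j : ℕ) = algebraMap (MvPolynomial (Fin ℓ) ℤ) (Kf ℓ) (X j) := by
  unfold Xv
  rw [dif_pos j.isLt]

lemma Xv_ne (ℓ : ℕ) {j k : Fin ℓ} (h : j ≠ k) : Xv ℓ (j : ℕ) ≠ Xv ℓ (k : ℕ) := by
  rw [Xv_fin, Xv_fin]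
  intro he
  exact h (MvPolynomial.X_injective ((IsFractionRing.injective (MvPolynomial (Fin ℓ) ℤ) (Kf ℓ)) he))

lemma swapK_algebraMap (ℓ i : ℕ) (p : MvPolynomial (Fin ℓ) ℤ) :
    swapK ℓ i (algebraMap _ (Kf ℓ) p) = algebraMap _ (Kf ℓ) (swapAlg ℓ i p) :=
  IsFractionRing.lift_algebraMap _ _

lemma swapK_Xv (ℓ i : ℕ) (h : i + 1 < ℓ) (j : Fin ℓ) :
    swapK ℓ i (Xv ℓ (j : ℕ)) =
      Xv ℓ ((Equiv.swap (⟨i, Nat.lt_of_succ_lt h⟩ : Fin ℓ) ⟨i + 1, h⟩ j : Fin ℓ) : ℕ) := by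
  rw [Xv_fin, swapK_algebraMap, Xv_fin]
  congr 1
  unfold swapAlg
  rw [dif_pos h]
  simp [renameEquiv_apply, rename_X]

lemma dem_add (ℓ i : ℕ) (f g : Kf ℓ) : dem ℓ i (f + g) = dem ℓ i f + dem ℓ i g := by
  unfold dem
  rw [map_add]
  ring

lemma dem_zsmul (ℓ i : ℕ) (k : ℤ) (f : Kf ℓ) : dem ℓ i (k • f) = k • dem ℓ i f := by
  unfold dem
  rw [zsmul_eq_mul, zsmul_eq_mul, map_mul, map_intCast]
  ring

lemma dem_zero (ℓ i : ℕ) : dem ℓ i 0 = 0 := by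
  unfold dem; rw [map_zero]; ring

/-- The Laurent-polynomial model: finitely supported functions on exponent vectors. -/
abbrev L (ℓ : ℕ) := (Fin ℓ → ℤ) →₀ ℤ

noncomputable def phi (ℓ : ℕ) : L ℓ →ₗ[ℤ] Kf ℓ := Finsupp.linearCombination ℤ (monK ℓ)

lemma phi_single (ℓ : ℕ) (α : Fin ℓ → ℤ) (k : ℤ) :
    phi ℓ (Finsupp.single α k) = k • monK ℓ α := by
  simp [phi, Finsupp.linearCombination_single]

lemma monK_add (ℓ : ℕ) (α β : Fin ℓ → ℤ) : monK ℓ (α + β) = monK ℓ α * monK ℓ β := by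
  unfold monK
  rw [← Finset.prod_mul_distrib]
  exact Finset.prod_congr rfl fun i _ => zpow_add₀ (Xv_ne_zero ℓ i) _ _

lemma monK_nonneg_eq (ℓ : ℕ) (α : Fin ℓ → ℤ) (hα : ∀ i, 0 ≤ α i) :
    monK ℓ α = algebraMap (MvPolynomial (Fin ℓ) ℤ) (Kf ℓ)
      (monomial (Finsupp.equivFunOnFinite.symm fun i => (α i).toNat) 1) := by
  set d : Fin ℓ →₀ ℕ := Finsupp.equivFunOnFinite.symm fun i => (α i).toNat with hd
  have hdi : ∀ i, d i = (α i).toNat := fun i => rfl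
  have step1 : monK ℓ α = ∏ i : Fin ℓ, algebraMap (MvPolynomial (Fin ℓ) ℤ) (Kf ℓ) (X i ^ d i) := by
    refine Finset.prod_congr rfl fun i _ => ?_
    rw [map_pow, ← Xv_fin, ← zpow_natCast]
    congr 1
    rw [hdi]
    exact (Int.toNat_of_nonneg (hα i)).symm
  rw [step1, ← map_prod]
  congr 1
  rw [← MvPolynomial.prod_X_pow_eq_monomial]
  exact (Finset.prod_subset (Finset.subset_univ _) (by
    intro i _ hi
    simp only [Finsupp.mem_support_iff, ne_eq, not_not] at hi
    rw [hi, pow_zero])).symm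


lemma phi_eq_zero (ℓ : ℕ) (c : L ℓ) (hc : phi ℓ c = 0) : c = 0 := by
  classical
  have harith : ∀ (a : ℤ) (M : ℕ), (-a).toNat ≤ M → 0 ≤ a + M := by
    intro a M h
    omega
  obtain ⟨N, hN⟩ : ∃ N : ℕ, ∀ β ∈ c.support, ∀ i, 0 ≤ β i + (N : ℤ) := by
    refine ⟨c.support.sup fun β => Finset.univ.sup fun i => (-(β i)).toNat, ?_⟩
    intro β hβ i
    exact harith _ _
      (le_trans (Finset.le_sup (f := fun i => (-(β i)).toNat) (Finset.mem_univ i))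
        (Finset.le_sup (f := fun β => Finset.univ.sup fun i => (-(β i)).toNat) hβ))
  obtain ⟨d, hdi⟩ : ∃ d : (Fin ℓ → ℤ) → (Fin ℓ →₀ ℕ), ∀ β i, d β i = (β i + N).toNat :=
    ⟨fun β => Finsupp.equivFunOnFinite.symm fun i => (β i + N).toNat, fun _ _ => rfl⟩
  have hmon : ∀ β ∈ c.support, monK ℓ β * monK ℓ (fun _ => (N : ℤ)) =
      algebraMap (MvPolynomial (Fin ℓ) ℤ) (Kf ℓ) (monomial (d β) 1) := by
    intro β hβ
    rw [← monK_add]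
    rw [monK_nonneg_eq ℓ (β + fun _ => (N : ℤ)) (fun i => hN β hβ i)]
    simp only [Pi.add_apply]
    have hE : (Finsupp.equivFunOnFinite.symm fun i => (β i + (N : ℤ)).toNat : Fin ℓ →₀ ℕ) = d β :=
      Finsupp.ext fun i => by rw [hdi]; rfl
    rw [hE]
  have key : phi ℓ c * monK ℓ (fun _ => (N : ℤ)) =
      algebraMap (MvPolynomial (Fin ℓ) ℤ) (Kf ℓ) (∑ β ∈ c.support, monomial (d β) (c β)) := by
    rw [map_sum, phi, Finsupp.linearCombination_apply, Finsupp.sum, Finset.sum_mul]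
    refine Finset.sum_congr rfl fun β hβ => ?_
    rw [smul_mul_assoc, hmon β hβ, ← map_zsmul]
    congr 1
    rw [MvPolynomial.smul_monomial, smul_eq_mul, mul_one]
  rw [hc, zero_mul] at key
  have hP : (∑ β ∈ c.support, monomial (d β) (c β)) = 0 :=
    (IsFractionRing.injective (MvPolynomial (Fin ℓ) ℤ) (Kf ℓ)) (by rw [← key, map_zero])
  have hd_inj : ∀ β ∈ c.support, ∀ β' ∈ c.support, d β = d β' → β = β' := by
    intro β hβ β' hβ' he
    funext i
    have h2 : (β i + N).toNat = (β' i + N).toNat := by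
      have := DFunLike.congr_fun he i
      rwa [hdi, hdi] at this
    have := hN β hβ i
    have := hN β' hβ' i
    omega
  refine Finsupp.ext fun β => ?_
  rw [Finsupp.coe_zero, Pi.zero_apply]
  by_cases hβ : β ∈ c.support
  · have hcf : coeff (d β) (∑ β' ∈ c.support, monomial (d β') (c β')) = c β := by
      rw [coeff_sum]
      rw [Finset.sum_eq_single β]
      · rw [coeff_monomial, if_pos rfl]
      · intro β' hβ' hne
        rw [coeff_monomial, if_neg]
        intro hcontra
        exact hne (hd_inj β' hβ' β hβ hcontra)
      · intro h; exact absurd hβ h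
    rw [hP] at hcf
    simpa using hcf.symm
  · rwa [Finsupp.mem_support_iff, not_not] at hβ

lemma phi_injective (ℓ : ℕ) : Function.Injective (phi ℓ) := by
  intro a b hab
  have : phi ℓ (a - b) = 0 := by rw [map_sub, hab, sub_self]
  exact sub_eq_zero.mp (phi_eq_zero ℓ _ this)


variable {ℓ : ℕ}

variable {ℓ : ℕ}

/-- `∑ j, max (β j - x) 0`. -/
def Fc (ℓ : ℕ) (x : ℤ) (β : Fin ℓ → ℤ) : ℤ := ∑ j : Fin ℓ, max (β j - x) 0

def mult (ℓ : ℕ) (β : Fin ℓ → ℤ) : Multiset ℤ := Multiset.map β Finset.univ.val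

def ninv (ℓ : ℕ) (β : Fin ℓ → ℤ) : ℕ :=
  ((Finset.univ : Finset (Fin ℓ × Fin ℓ)).filter fun p => p.1 < p.2 ∧ β p.1 < β p.2).card

/-- The strict partial order used for the triangularity of key polynomials. -/
def prec (ℓ : ℕ) (β α : Fin ℓ → ℤ) : Prop :=
  (∑ j, β j = ∑ j, α j) ∧ (∀ x : ℤ, Fc ℓ x β ≤ Fc ℓ x α) ∧
    (mult ℓ β = mult ℓ α → ninv ℓ β < ninv ℓ α)

lemma cnt_mult (w : Fin ℓ → ℤ) (e : ℤ) :
    ((mult ℓ w).count e : ℤ) = ∑ j : Fin ℓ, (if w j = e then 1 else 0) := by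
  classical
  rw [mult, Multiset.count_map]
  have : (Multiset.filter (fun a => e = w a) Finset.univ.val).card
      = (Finset.univ.filter fun a => e = w a).card := rfl
  rw [this, Finset.card_filter]
  push_cast
  refine Finset.sum_congr rfl fun j _ => ?_
  by_cases hj : e = w j <;> simp [hj, eq_comm]

lemma Fc_eq_of_mult_eq {β α : Fin ℓ → ℤ} (hm : mult ℓ β = mult ℓ α) :
    ∀ x, Fc ℓ x β = Fc ℓ x α := by
  intro x
  have : ∀ w : Fin ℓ → ℤ, Fc ℓ x w = ((mult ℓ w).map fun e => max (e - x) 0).sum := by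
    intro w
    rw [mult, Multiset.map_map]
    rfl
  rw [this, this, hm]

lemma mult_eq_of_Fc_eq {β α : Fin ℓ → ℤ} (hf : ∀ x, Fc ℓ x β = Fc ℓ x α) :
    mult ℓ β = mult ℓ α := by
  classical
  have hgt : ∀ w : Fin ℓ → ℤ, ∀ x : ℤ,
      Fc ℓ x w - Fc ℓ (x + 1) w = ∑ j : Fin ℓ, (if x < w j then 1 else 0) := by
    intro w x
    rw [Fc, Fc, ← Finset.sum_sub_distrib]
    refine Finset.sum_congr rfl fun j _ => ?_
    by_cases hj : x < w j <;> simp [hj] <;> omega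
  have hcnt : ∀ w : Fin ℓ → ℤ, ∀ e : ℤ, ((mult ℓ w).count e : ℤ)
      = (Fc ℓ (e - 1) w - Fc ℓ e w) - (Fc ℓ e w - Fc ℓ (e + 1) w) := by
    intro w e
    have h1 := hgt w (e - 1)
    rw [show e - 1 + 1 = e by ring] at h1
    rw [h1, hgt w e, cnt_mult, ← Finset.sum_sub_distrib]
    refine Finset.sum_congr rfl fun j _ => ?_
    by_cases h2 : w j = e <;> by_cases h3 : e - 1 < w j <;> by_cases h4 : e < w j <;>
      simp [h2, h3, h4] <;> omega
  refine Multiset.ext.mpr fun e => ?_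
  have := hcnt β e
  rw [hf, hf, hf, ← hcnt α e] at this
  exact_mod_cast this

lemma sum_comp_perm (σ : Equiv.Perm (Fin ℓ)) (w : Fin ℓ → ℤ) :
    ∑ j, (w ∘ σ) j = ∑ j, w j :=
  Equiv.sum_comp σ w

lemma mult_comp_perm (σ : Equiv.Perm (Fin ℓ)) (w : Fin ℓ → ℤ) :
    mult ℓ (w ∘ σ) = mult ℓ w := by
  classical
  refine Multiset.ext.mpr fun e => ?_
  have h1 := cnt_mult (ℓ := ℓ) (w ∘ σ) e
  have h2 := cnt_mult (ℓ := ℓ) w e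
  have h3 : ∑ j : Fin ℓ, (if (w ∘ σ) j = e then 1 else (0 : ℤ))
      = ∑ j : Fin ℓ, (if w j = e then 1 else 0) :=
    Equiv.sum_comp σ fun j => if w j = e then (1 : ℤ) else 0
  have : ((mult ℓ (w ∘ σ)).count e : ℤ) = ((mult ℓ w).count e : ℤ) := by
    rw [h1, h2, ← h3]
  exact_mod_cast this

lemma Fc_comp_perm (σ : Equiv.Perm (Fin ℓ)) (w : Fin ℓ → ℤ) (x : ℤ) :
    Fc ℓ x (w ∘ σ) = Fc ℓ x w :=
  Fc_eq_of_mult_eq (mult_comp_perm σ w) x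

lemma prec_trans {a b c : Fin ℓ → ℤ} (h1 : prec ℓ a b) (h2 : prec ℓ b c) : prec ℓ a c := by
  obtain ⟨hs1, hf1, hn1⟩ := h1
  obtain ⟨hs2, hf2, hn2⟩ := h2
  refine ⟨hs1.trans hs2, fun x => (hf1 x).trans (hf2 x), fun hm => ?_⟩
  have hfac : ∀ x, Fc ℓ x a = Fc ℓ x c := Fc_eq_of_mult_eq hm
  have hfb : ∀ x, Fc ℓ x b = Fc ℓ x c := fun x => le_antisymm (hf2 x) (by rw [← hfac x]; exact hf1 x)
  have hmb : mult ℓ b = mult ℓ c := mult_eq_of_Fc_eq hfb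
  have hmab : mult ℓ a = mult ℓ b := hm.trans hmb.symm
  exact (hn1 hmab).trans (hn2 hmb)

lemma prec_irrefl (a : Fin ℓ → ℤ) : ¬ prec ℓ a a := fun h => lt_irrefl _ (h.2.2 rfl)

lemma prec_finite (α : Fin ℓ → ℤ) : {β | prec ℓ β α}.Finite := by
  classical
  set hi : ℤ := Fc ℓ 0 α with hhi
  set lo : ℤ := (∑ j, α j) - ℓ * max hi 0 with hlo
  have : {β | prec ℓ β α} ⊆ Set.Icc (fun _ => lo) (fun _ => hi) := by
    rintro β ⟨hs, hf, -⟩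
    have hub : ∀ j, β j ≤ hi := by
      intro j
      have h1 : max (β j - 0) 0 ≤ Fc ℓ 0 β :=
        Finset.single_le_sum (f := fun j => max (β j - 0) 0)
          (fun k _ => le_max_right _ _) (Finset.mem_univ j)
      have h2 := hf 0
      simp only [sub_zero] at h1
      have := le_max_left (β j) 0
      omega
    constructor
    · intro j
      simp only
      have hsum : ∑ k ∈ Finset.univ.erase j, β k ≤ (Finset.univ.erase j).card • max hi 0 :=
        Finset.sum_le_card_nsmul _ _ _ fun k _ => le_trans (hub k) (le_max_left _ _)
      have hcard : (Finset.univ.erase j).card ≤ ℓ :=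
        le_trans (Finset.card_erase_of_mem (Finset.mem_univ j)).le (by simp)
      have hβj : β j = (∑ j, α j) - ∑ k ∈ Finset.univ.erase j, β k := by
        rw [← hs, ← Finset.add_sum_erase _ _ (Finset.mem_univ j)]
        ring
      have hnn : (0 : ℤ) ≤ max hi 0 := le_max_right _ _
      have : ((Finset.univ.erase j).card : ℤ) * max hi 0 ≤ (ℓ : ℤ) * max hi 0 := by
        apply mul_le_mul_of_nonneg_right _ hnn
        exact_mod_cast hcard
      rw [nsmul_eq_mul] at hsum
      omega
    · intro j
      exact hub j
  exact Set.Finite.subset (Set.finite_Icc _ _) this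


/-- Every finite nonempty set has a maximal element w.r.t. a transitive relation. -/
lemma exists_maximal (r : (Fin ℓ → ℤ) → (Fin ℓ → ℤ) → Prop)
    (hirr : ∀ a, ¬ r a a) (htr : ∀ {a b c}, r a b → r b c → r a c) :
    ∀ (s : Finset (Fin ℓ → ℤ)), s.Nonempty → ∃ a ∈ s, ∀ b ∈ s, ¬ r a b := by
  classical
  intro s
  induction s using Finset.strongInduction with
  | _ s ih =>
    rintro ⟨a, ha⟩
    by_cases hmax : ∀ b ∈ s, ¬ r a b
    · exact ⟨a, ha, hmax⟩
    · push_neg at hmax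
      obtain ⟨b, hb, hab⟩ := hmax
      have hss : s.filter (fun x => r a x) ⊂ s := by
        refine Finset.filter_ssubset.mpr ⟨a, ha, hirr a⟩
      obtain ⟨m, hm, hmmax⟩ := ih _ hss ⟨b, Finset.mem_filter.mpr ⟨hb, hab⟩⟩
      have ham : r a m := (Finset.mem_filter.mp hm).2
      refine ⟨m, (Finset.mem_filter.mp hm).1, fun x hx hmx => ?_⟩
      exact hmmax x (Finset.mem_filter.mpr ⟨hx, htr ham hmx⟩) hmx


section SwapD
variable {i : ℕ}

def fidx (h : i + 1 < ℓ) : Fin ℓ := ⟨i, Nat.lt_of_succ_lt h⟩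
def fidx1 (h : i + 1 < ℓ) : Fin ℓ := ⟨i + 1, h⟩

lemma fidx_ne (h : i + 1 < ℓ) : fidx h ≠ fidx1 h := by
  simp [fidx, fidx1, Fin.ext_iff]

def updV (h : i + 1 < ℓ) (β : Fin ℓ → ℤ) (x y : ℤ) : Fin ℓ → ℤ :=
  fun j => if j = fidx h then x else if j = fidx1 h then y else β j

lemma updV_fi (h : i + 1 < ℓ) (β : Fin ℓ → ℤ) (x y : ℤ) : updV h β x y (fidx h) = x := by
  simp [updV]

lemma updV_fi1 (h : i + 1 < ℓ) (β : Fin ℓ → ℤ) (x y : ℤ) : updV h β x y (fidx1 h) = y := by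
  rw [updV, if_neg ((fidx_ne h).symm : ¬ fidx1 h = fidx h), if_pos rfl]

lemma updV_other (h : i + 1 < ℓ) (β : Fin ℓ → ℤ) (x y : ℤ) {j : Fin ℓ}
    (h1 : j ≠ fidx h) (h2 : j ≠ fidx1 h) : updV h β x y j = β j := by
  simp [updV, h1, h2]

lemma swapVec_eq_updV (h : i + 1 < ℓ) (α : Fin ℓ → ℤ) :
    swapVec ℓ i α = updV h α (α (fidx1 h)) (α (fidx h)) := by
  funext j
  rw [swapVec, dif_pos h]
  by_cases h1 : j = fidx h
  · subst h1
    rw [updV_fi]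
    simp [fidx, fidx1, Function.comp, Equiv.swap_apply_left]
  · by_cases h2 : j = fidx1 h
    · subst h2
      rw [updV_fi1]
      simp [fidx, fidx1, Function.comp, Equiv.swap_apply_right]
    · rw [updV_other h _ _ _ h1 h2]
      exact congrArg α (Equiv.swap_apply_of_ne_of_ne h1 h2)

/-- Splitting a sum over `Fin ℓ` into the two swap coordinates and the rest. -/
lemma sum_split (h : i + 1 < ℓ) (g : Fin ℓ → ℤ) :
    ∑ j, g j = g (fidx h) + g (fidx1 h) +
      ∑ j ∈ (Finset.univ.erase (fidx h)).erase (fidx1 h), g j := by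
  classical
  rw [← Finset.add_sum_erase _ g (Finset.mem_univ (fidx h))]
  rw [← Finset.add_sum_erase _ g
    (Finset.mem_erase.mpr ⟨(fidx_ne h).symm, Finset.mem_univ _⟩)]
  ring

lemma ninv_swap (h : i + 1 < ℓ) (v : Fin ℓ → ℤ) (hv : v (fidx h) < v (fidx1 h)) :
    ninv ℓ v = ninv ℓ (v ∘ Equiv.swap (fidx h) (fidx1 h)) + 1 := by
  classical
  set σ := Equiv.swap (fidx h) (fidx1 h) with hσ
  set v' := v ∘ σ with hv'
  have hσfi : σ (fidx h) = fidx1 h := Equiv.swap_apply_left _ _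
  have hσfi1 : σ (fidx1 h) = fidx h := Equiv.swap_apply_right _ _
  have horder : ∀ p : Fin ℓ × Fin ℓ, p.1 < p.2 → p ≠ (fidx h, fidx1 h) → σ p.1 < σ p.2 := by
    rintro ⟨a, b⟩ hlt hne
    have hab : (a : ℕ) < b := hlt
    have hvi : (fidx h : ℕ) = i := rfl
    have hvi1 : (fidx1 h : ℕ) = i + 1 := rfl
    by_cases ha1 : a = fidx h
    · have hb1 : b ≠ fidx1 h := fun hc => hne (by rw [ha1, hc])
      have hb2 : b ≠ fidx h := by
        rintro rfl
        rw [ha1] at hab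
        omega
      subst ha1
      rw [hσ, Equiv.swap_apply_left, Equiv.swap_apply_of_ne_of_ne hb2 hb1]
      have hbv1 : (b : ℕ) ≠ i + 1 := fun hc => hb1 (Fin.ext (by rw [hc]; rfl))
      rw [hvi] at hab
      show (fidx1 h : ℕ) < b
      rw [hvi1]
      omega
    · by_cases ha2 : a = fidx1 h
      · have hb1 : b ≠ fidx h := by
          rintro rfl
          rw [ha2] at hab
          have hcc : (i + 1 : ℕ) < i := hab
          omega
        have hb2 : b ≠ fidx1 h := by
          rintro rfl
          exact lt_irrefl _ (ha2 ▸ hab)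
        subst ha2
        rw [hσ, Equiv.swap_apply_right, Equiv.swap_apply_of_ne_of_ne hb1 hb2]
        rw [hvi1] at hab
        show (fidx h : ℕ) < b
        rw [hvi]
        omega
      · rw [hσ, Equiv.swap_apply_of_ne_of_ne ha1 ha2]
        have hav : (a : ℕ) ≠ i := fun hc => ha1 (Fin.ext (by rw [hc]; rfl))
        have hav1 : (a : ℕ) ≠ i + 1 := fun hc => ha2 (Fin.ext (by rw [hc]; rfl))
        by_cases hb1 : b = fidx h
        · subst hb1
          rw [Equiv.swap_apply_left]
          show (a : ℕ) < fidx1 h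
          rw [hvi1]
          rw [hvi] at hab
          omega
        · by_cases hb2 : b = fidx1 h
          · subst hb2
            rw [Equiv.swap_apply_right]
            show (a : ℕ) < fidx h
            rw [hvi]
            rw [hvi1] at hab
            omega
          · rw [Equiv.swap_apply_of_ne_of_ne hb1 hb2]
            exact hlt
  set Sv := (Finset.univ : Finset (Fin ℓ × Fin ℓ)).filter fun p => p.1 < p.2 ∧ v p.1 < v p.2
    with hSv
  set Sv' := (Finset.univ : Finset (Fin ℓ × Fin ℓ)).filter fun p => p.1 < p.2 ∧ v' p.1 < v' p.2
    with hSv'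
  have hmemSv : (fidx h, fidx1 h) ∈ Sv := by
    rw [hSv, Finset.mem_filter]
    refine ⟨Finset.mem_univ _, ?_, hv⟩
    simp [fidx, fidx1, Fin.lt_def]
  have hnotmem : (fidx h, fidx1 h) ∉ Sv' := by
    rw [hSv', Finset.mem_filter]
    rintro ⟨-, -, hc⟩
    simp only [hv', Function.comp, hσfi, hσfi1] at hc
    omega
  have himg : Sv'.image (fun p => (σ p.1, σ p.2)) = Sv.erase (fidx h, fidx1 h) := by
    ext q
    simp only [Finset.mem_image, Finset.mem_erase]
    constructor
    · rintro ⟨p, hp, rfl⟩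
      rw [hSv', Finset.mem_filter] at hp
      obtain ⟨-, hlt, hvlt⟩ := hp
      have hpne : p ≠ (fidx h, fidx1 h) := by
        rintro rfl
        exact hnotmem (by rw [hSv', Finset.mem_filter]; exact ⟨Finset.mem_univ _, hlt, hvlt⟩)
      refine ⟨?_, ?_⟩
      · intro hc
        have h1 : σ p.1 = fidx h := congrArg Prod.fst hc
        have h2 : σ p.2 = fidx1 h := congrArg Prod.snd hc
        have : p.1 = σ (fidx h) := by rw [← h1]; simp [hσ]
        have hp2 : p.2 = σ (fidx1 h) := by rw [← h2]; simp [hσ]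
        rw [hσfi] at this
        rw [hσfi1] at hp2
        rw [this, hp2] at hlt
        exact absurd hlt (by simp [fidx, fidx1, Fin.lt_def])
      · rw [hSv, Finset.mem_filter]
        refine ⟨Finset.mem_univ _, horder p hlt hpne, ?_⟩
        simpa [hv', Function.comp] using hvlt
    · rintro ⟨hqne, hq⟩
      rw [hSv, Finset.mem_filter] at hq
      obtain ⟨-, hlt, hvlt⟩ := hq
      refine ⟨(σ q.1, σ q.2), ?_, ?_⟩
      · rw [hSv', Finset.mem_filter]
        refine ⟨Finset.mem_univ _, horder q hlt hqne, ?_⟩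
        simp only [hv', Function.comp]
        simpa [hσ] using hvlt
      · simp [hσ]
  have hinj : Function.Injective fun p : Fin ℓ × Fin ℓ => (σ p.1, σ p.2) := by
    rintro ⟨a, b⟩ ⟨c, d⟩ he
    simp only [Prod.mk.injEq] at he
    exact Prod.ext (σ.injective he.1) (σ.injective he.2)
  have hcard : Sv'.card = (Sv.erase (fidx h, fidx1 h)).card := by
    rw [← himg, Finset.card_image_of_injective _ hinj]
  have : Sv.card = (Sv.erase (fidx h, fidx1 h)).card + 1 :=
    (Finset.card_erase_add_one hmemSv).symm
  rw [ninv, ninv, ← hSv]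
  rw [show ((Finset.univ : Finset (Fin ℓ × Fin ℓ)).filter
    fun p => p.1 < p.2 ∧ (v ∘ σ) p.1 < (v ∘ σ) p.2) = Sv' from rfl]
  omega


lemma swapVec_invol (α : Fin ℓ → ℤ) : swapVec ℓ i (swapVec ℓ i α) = α := by
  unfold swapVec
  split
  · funext j
    simp [Function.comp]
  · rfl

/-- The image of a Laurent monomial under the Demazure operator, in the exponent model. -/
def demMon (h : i + 1 < ℓ) (β : Fin ℓ → ℤ) : L ℓ :=
  if β (fidx1 h) ≤ β (fidx h) then
    ∑ t ∈ Finset.range ((β (fidx h) - β (fidx1 h)).toNat + 1),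
      Finsupp.single (updV h β (β (fidx1 h) + t) (β (fidx h) - t)) 1
  else
    - ∑ t ∈ Finset.range ((β (fidx1 h) - β (fidx h) - 1).toNat),
      Finsupp.single (updV h β (β (fidx h) + 1 + t) (β (fidx1 h) - 1 - t)) 1

lemma swapVec_def (h : i + 1 < ℓ) (α : Fin ℓ → ℤ) :
    swapVec ℓ i α = α ∘ Equiv.swap (fidx h) (fidx1 h) := dif_pos h

def Rst (h : i + 1 < ℓ) (β : Fin ℓ → ℤ) : Kf ℓ :=
  ∏ j ∈ (Finset.univ.erase (fidx h)).erase (fidx1 h), Xv ℓ (j : ℕ) ^ β j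

lemma monK_split (h : i + 1 < ℓ) (β : Fin ℓ → ℤ) :
    monK ℓ β = Xv ℓ i ^ β (fidx h) * (Xv ℓ (i + 1) ^ β (fidx1 h) * Rst h β) := by
  rw [monK, ← Finset.mul_prod_erase _ _ (Finset.mem_univ (fidx h)),
    ← Finset.mul_prod_erase _ _
      (Finset.mem_erase.mpr ⟨(fidx_ne h).symm, Finset.mem_univ (fidx1 h)⟩)]
  rfl

lemma Rst_updV (h : i + 1 < ℓ) (β : Fin ℓ → ℤ) (x y : ℤ) :
    Rst h (updV h β x y) = Rst h β := by
  refine Finset.prod_congr rfl fun j hj => ?_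
  obtain ⟨h2, h1, -⟩ : j ≠ fidx1 h ∧ j ≠ fidx h ∧ j ∈ Finset.univ := by
    simpa [Finset.mem_erase] using hj
  rw [updV_other h β x y h1 h2]

lemma monK_updV (h : i + 1 < ℓ) (β : Fin ℓ → ℤ) (x y : ℤ) :
    monK ℓ (updV h β x y) = Xv ℓ i ^ x * (Xv ℓ (i + 1) ^ y * Rst h β) := by
  rw [monK_split h, updV_fi, updV_fi1, Rst_updV]

lemma swapK_monK (h : i + 1 < ℓ) (β : Fin ℓ → ℤ) :
    swapK ℓ i (monK ℓ β) = monK ℓ (swapVec ℓ i β) := by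
  classical
  rw [monK, map_prod, swapVec_def h, monK]
  have step1 : ∏ j : Fin ℓ, swapK ℓ i (Xv ℓ (j : ℕ) ^ β j)
      = ∏ j : Fin ℓ, Xv ℓ ((Equiv.swap (fidx h) (fidx1 h) j : Fin ℓ) : ℕ) ^ β j :=
    Finset.prod_congr rfl fun j _ => by rw [map_zpow₀, swapK_Xv ℓ i h j]; rfl
  rw [step1]
  refine Fintype.prod_equiv (Equiv.swap (fidx h) (fidx1 h)) _ _ fun j => ?_
  simp only [Function.comp]
  rw [Equiv.swap_apply_self]

lemma telescope_desc (u v : Kf ℓ) (hu : u ≠ 0) (hv : v ≠ 0) (huv : u - v ≠ 0) (b c : ℤ)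
    (hbc : c ≤ b) :
    (u * (u ^ b * v ^ c) - v * (u ^ c * v ^ b)) / (u - v)
      = ∑ t ∈ Finset.range ((b - c).toNat + 1), u ^ (c + t) * v ^ (b - t) := by
  have hd : (((b - c).toNat : ℤ)) = b - c := Int.toNat_of_nonneg (by omega)
  set d := (b - c).toNat with hddef
  have h1 : u * (u ^ b * v ^ c) = u ^ c * v ^ c * u ^ (((d + 1 : ℕ)) : ℤ) := by
    have e1 : u ^ ((1 : ℤ) + b) = u ^ c * u ^ (((d + 1 : ℕ)) : ℤ) := by
      rw [← zpow_add₀ hu]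
      congr 1
      push_cast
      omega
    calc u * (u ^ b * v ^ c) = u ^ ((1 : ℤ) + b) * v ^ c := by
          rw [zpow_add₀ hu, zpow_one, mul_assoc]
      _ = u ^ c * v ^ c * u ^ (((d + 1 : ℕ)) : ℤ) := by rw [e1]; ring
  have h2 : v * (u ^ c * v ^ b) = u ^ c * v ^ c * v ^ (((d + 1 : ℕ)) : ℤ) := by
    have e1 : v ^ ((1 : ℤ) + b) = v ^ c * v ^ (((d + 1 : ℕ)) : ℤ) := by
      rw [← zpow_add₀ hv]
      congr 1
      push_cast
      omega
    calc v * (u ^ c * v ^ b) = u ^ c * v ^ ((1 : ℤ) + b) := by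
          rw [zpow_add₀ hv, zpow_one]; ring
      _ = u ^ c * v ^ c * v ^ (((d + 1 : ℕ)) : ℤ) := by rw [e1]; ring
  rw [h1, h2, ← mul_sub, zpow_natCast, zpow_natCast, ← geom_sum₂_mul u v (d + 1)]
  rw [← mul_assoc, mul_div_assoc, div_self huv, mul_one, Finset.mul_sum]
  refine Finset.sum_congr rfl fun t ht => ?_
  have ht' : t ≤ d := Nat.lt_succ_iff.mp (Finset.mem_range.mp ht)
  rw [← zpow_natCast u t, ← zpow_natCast v (d + 1 - 1 - t)]
  rw [show u ^ c * v ^ c * (u ^ ((t : ℕ) : ℤ) * v ^ (((d + 1 - 1 - t : ℕ)) : ℤ))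
      = (u ^ c * u ^ ((t : ℕ) : ℤ)) * (v ^ c * v ^ (((d + 1 - 1 - t : ℕ)) : ℤ)) from by ring]
  rw [← zpow_add₀ hu, ← zpow_add₀ hv]
  congr 2
  push_cast
  omega

lemma telescope_asc (u v : Kf ℓ) (hu : u ≠ 0) (hv : v ≠ 0) (huv : u - v ≠ 0) (b c : ℤ)
    (hbc : b < c) :
    (u * (u ^ b * v ^ c) - v * (u ^ c * v ^ b)) / (u - v)
      = - ∑ t ∈ Finset.range ((c - b - 1).toNat), u ^ (b + 1 + t) * v ^ (c - 1 - t) := by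
  have hd : (((c - b - 1).toNat : ℤ)) = c - b - 1 := Int.toNat_of_nonneg (by omega)
  set e := (c - b - 1).toNat with hedef
  have h1 : u * (u ^ b * v ^ c) = u ^ (b + 1) * v ^ (b + 1) * v ^ ((e : ℕ) : ℤ) := by
    have e1 : v ^ c = v ^ (b + 1) * v ^ ((e : ℕ) : ℤ) := by
      rw [← zpow_add₀ hv]
      congr 1
      omega
    calc u * (u ^ b * v ^ c) = u ^ (b + 1) * v ^ c := by
          rw [zpow_add₀ hu, zpow_one]; ring
      _ = u ^ (b + 1) * v ^ (b + 1) * v ^ ((e : ℕ) : ℤ) := by rw [e1]; ring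
  have h2 : v * (u ^ c * v ^ b) = u ^ (b + 1) * v ^ (b + 1) * u ^ ((e : ℕ) : ℤ) := by
    have e1 : u ^ c = u ^ (b + 1) * u ^ ((e : ℕ) : ℤ) := by
      rw [← zpow_add₀ hu]
      congr 1
      omega
    calc v * (u ^ c * v ^ b) = u ^ c * v ^ (b + 1) := by
          rw [zpow_add₀ hv, zpow_one]; ring
      _ = u ^ (b + 1) * v ^ (b + 1) * u ^ ((e : ℕ) : ℤ) := by rw [e1]; ring
  rw [h1, h2]
  rw [show u ^ (b+1) * v ^ (b+1) * v ^ ((e : ℕ) : ℤ) - u ^ (b+1) * v ^ (b+1) * u ^ ((e : ℕ) : ℤ)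
      = -(u ^ (b+1) * v ^ (b+1) * (u ^ ((e : ℕ) : ℤ) - v ^ ((e : ℕ) : ℤ))) from by ring]
  rw [zpow_natCast, zpow_natCast, ← geom_sum₂_mul u v e]
  have hcancel : ∀ A S : Kf ℓ, -(A * (S * (u - v))) / (u - v) = -(A * S) := by
    intro A S
    field_simp
  rw [hcancel, neg_inj, Finset.mul_sum]
  refine Finset.sum_congr rfl fun t ht => ?_
  have ht' : t < e := Finset.mem_range.mp ht
  rw [← zpow_natCast u t, ← zpow_natCast v (e - 1 - t)]
  rw [show u ^ (b+1) * v ^ (b+1) * (u ^ ((t : ℕ) : ℤ) * v ^ (((e - 1 - t : ℕ)) : ℤ))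
      = (u ^ (b+1) * u ^ ((t : ℕ) : ℤ)) * (v ^ (b+1) * v ^ (((e - 1 - t : ℕ)) : ℤ)) from by ring]
  rw [← zpow_add₀ hu, ← zpow_add₀ hv]
  congr 2
  push_cast
  omega

lemma dem_monK (h : i + 1 < ℓ) (β : Fin ℓ → ℤ) :
    dem ℓ i (monK ℓ β) = phi ℓ (demMon h β) := by
  classical
  have hu : Xv ℓ i ≠ 0 := Xv_ne_zero ℓ i
  have hv : Xv ℓ (i + 1) ≠ 0 := Xv_ne_zero ℓ (i + 1)
  have huv : Xv ℓ i - Xv ℓ (i + 1) ≠ 0 := by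
    rw [sub_ne_zero]
    exact Xv_ne ℓ (fidx_ne h)
  have hswap : monK ℓ (swapVec ℓ i β)
      = Xv ℓ i ^ β (fidx1 h) * (Xv ℓ (i + 1) ^ β (fidx h) * Rst h β) := by
    rw [swapVec_eq_updV h, monK_updV h]
  rw [dem, swapK_monK h, hswap, monK_split h]
  set u := Xv ℓ i
  set v := Xv ℓ (i + 1)
  set b := β (fidx h)
  set c := β (fidx1 h)
  set R := Rst h β with hR
  have hnum : u * (u ^ b * (v ^ c * R)) - v * (u ^ c * (v ^ b * R))
      = (u * (u ^ b * v ^ c) - v * (u ^ c * v ^ b)) * R := by ring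
  rw [hnum, mul_comm _ R, mul_div_assoc]
  by_cases hbc : c ≤ b
  · rw [telescope_desc u v hu hv huv b c hbc]
    rw [demMon, if_pos hbc, map_sum, Finset.mul_sum]
    refine Finset.sum_congr rfl fun t ht => ?_
    rw [phi_single, one_zsmul, monK_updV h]
    ring
  · push_neg at hbc
    rw [telescope_asc u v hu hv huv b c hbc]
    rw [demMon, if_neg (not_le.mpr hbc), map_neg, map_sum]
    have hgen : ∀ x y : Kf ℓ, x * -y = -(x * y) := fun x y => mul_neg x y
    rw [hgen, neg_inj, Finset.mul_sum]
    refine Finset.sum_congr rfl fun t ht => ?_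
    rw [phi_single, one_zsmul, monK_updV h]
    ring

lemma updV_self (h : i + 1 < ℓ) (β : Fin ℓ → ℤ) :
    updV h β (β (fidx h)) (β (fidx1 h)) = β := by
  funext j
  by_cases h1 : j = fidx h
  · subst h1; rw [updV_fi]
  · by_cases h2 : j = fidx1 h
    · subst h2; rw [updV_fi1]
    · exact updV_other h _ _ _ h1 h2

lemma swapVec_fi (h : i + 1 < ℓ) (α : Fin ℓ → ℤ) :
    swapVec ℓ i α (fidx h) = α (fidx1 h) := by
  rw [swapVec_eq_updV h, updV_fi]

lemma swapVec_fi1 (h : i + 1 < ℓ) (α : Fin ℓ → ℤ) :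
    swapVec ℓ i α (fidx1 h) = α (fidx h) := by
  rw [swapVec_eq_updV h, updV_fi1]

lemma swapVec_other (h : i + 1 < ℓ) (α : Fin ℓ → ℤ) {j : Fin ℓ}
    (h1 : j ≠ fidx h) (h2 : j ≠ fidx1 h) : swapVec ℓ i α j = α j := by
  rw [swapVec_eq_updV h, updV_other h _ _ _ h1 h2]

lemma demMon_mem_supp (h : i + 1 < ℓ) (β : Fin ℓ → ℤ) {γ : Fin ℓ → ℤ}
    (hγ : γ ∈ (demMon h β).support) :
    ∃ t : ℤ, γ = updV h β t (β (fidx h) + β (fidx1 h) - t) ∧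
      (β (fidx h) ≤ t ∨ β (fidx1 h) ≤ t) ∧ (t ≤ β (fidx h) ∨ t ≤ β (fidx1 h)) ∧
      (β (fidx h) < β (fidx1 h) → β (fidx h) < t ∧ t < β (fidx1 h)) := by
  classical
  rw [demMon] at hγ
  split at hγ
  · rename_i hbc
    have hsub := Finsupp.support_finset_sum (s := Finset.range ((β (fidx h) - β (fidx1 h)).toNat + 1))
      (f := fun t => Finsupp.single (updV h β (β (fidx1 h) + t) (β (fidx h) - t)) (1 : ℤ)) hγ
    obtain ⟨t, htmem, htsupp⟩ := Finset.mem_biUnion.mp hsub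
    have := Finsupp.support_single_subset htsupp
    rw [Finset.mem_singleton] at this
    subst this
    have htle : (t : ℤ) ≤ β (fidx h) - β (fidx1 h) := by
      have := Finset.mem_range.mp htmem
      have h2 : (t : ℤ) ≤ ((β (fidx h) - β (fidx1 h)).toNat : ℤ) := by exact_mod_cast Nat.lt_succ_iff.mp this
      omega
    refine ⟨β (fidx1 h) + t, ?_, Or.inr (by omega), Or.inl (by omega), fun hlt => absurd hlt (by omega)⟩
    rw [show β (fidx h) + β (fidx1 h) - (β (fidx1 h) + (t : ℤ)) = β (fidx h) - t from by omega]
  · rename_i hbc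
    push_neg at hbc
    rw [Finsupp.support_neg] at hγ
    have hsub := Finsupp.support_finset_sum (s := Finset.range ((β (fidx1 h) - β (fidx h) - 1).toNat))
      (f := fun t => Finsupp.single (updV h β (β (fidx h) + 1 + t) (β (fidx1 h) - 1 - t)) (1 : ℤ)) hγ
    obtain ⟨t, htmem, htsupp⟩ := Finset.mem_biUnion.mp hsub
    have := Finsupp.support_single_subset htsupp
    rw [Finset.mem_singleton] at this
    subst this
    have htle : (t : ℤ) < β (fidx1 h) - β (fidx h) - 1 := by
      have := Finset.mem_range.mp htmem
      have h2 : (t : ℤ) < ((β (fidx1 h) - β (fidx h) - 1).toNat : ℤ) := by exact_mod_cast this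
      omega
    refine ⟨β (fidx h) + 1 + t, ?_, Or.inl (by omega), Or.inr (by omega),
      fun _ => ⟨by omega, by omega⟩⟩
    rw [show β (fidx h) + β (fidx1 h) - (β (fidx h) + 1 + (t : ℤ)) = β (fidx1 h) - 1 - t
      from by omega]

lemma cnt_split (h : i + 1 < ℓ) (w : Fin ℓ → ℤ) (e : ℤ) :
    ((mult ℓ w).count e : ℤ) = (if w (fidx h) = e then 1 else 0) +
      (if w (fidx1 h) = e then 1 else 0) +
      ∑ j ∈ (Finset.univ.erase (fidx h)).erase (fidx1 h), (if w j = e then 1 else 0) := by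
  rw [cnt_mult, sum_split h]

lemma rest_congr_updV (h : i + 1 < ℓ) (β : Fin ℓ → ℤ) (x y : ℤ) (g : ℤ → ℤ) :
    ∑ j ∈ (Finset.univ.erase (fidx h)).erase (fidx1 h), g (updV h β x y j)
      = ∑ j ∈ (Finset.univ.erase (fidx h)).erase (fidx1 h), g (β j) := by
  refine Finset.sum_congr rfl fun j hj => ?_
  obtain ⟨h2, h1, -⟩ : j ≠ fidx1 h ∧ j ≠ fidx h ∧ j ∈ Finset.univ := by
    simpa [Finset.mem_erase] using hj
  rw [updV_other h β x y h1 h2]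

lemma mult_updV_cases (h : i + 1 < ℓ) (β : Fin ℓ → ℤ) (t : ℤ)
    (hm : mult ℓ (updV h β t (β (fidx h) + β (fidx1 h) - t)) = mult ℓ β) :
    t = β (fidx h) ∨ t = β (fidx1 h) := by
  have hc := congrArg (fun m => (Multiset.count t m : ℤ)) hm
  rw [cnt_split h, cnt_split h] at hc
  rw [updV_fi, updV_fi1] at hc
  rw [rest_congr_updV h β _ _ (fun z => if z = t then 1 else 0)] at hc
  have hc2 : (if t = t then (1:ℤ) else 0) + (if β (fidx h) + β (fidx1 h) - t = t then 1 else 0)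
      = (if β (fidx h) = t then 1 else 0) + (if β (fidx1 h) = t then 1 else 0) := by omega
  split_ifs at hc2 <;> omega

lemma Fc_updV_le (h : i + 1 < ℓ) (β : Fin ℓ → ℤ) (t : ℤ)
    (h1 : β (fidx h) ≤ t ∨ β (fidx1 h) ≤ t) (h2 : t ≤ β (fidx h) ∨ t ≤ β (fidx1 h))
    (x : ℤ) :
    Fc ℓ x (updV h β t (β (fidx h) + β (fidx1 h) - t)) ≤ Fc ℓ x β := by
  rw [Fc, Fc, sum_split h, sum_split h (fun j => max (β j - x) 0)]
  rw [updV_fi, updV_fi1]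
  rw [rest_congr_updV h β _ _ (fun z => max (z - x) 0)]
  rcases h1 with h1 | h1 <;> rcases h2 with h2 | h2 <;> omega

lemma sum_updV_eq (h : i + 1 < ℓ) (β : Fin ℓ → ℤ) (t : ℤ) :
    ∑ j, updV h β t (β (fidx h) + β (fidx1 h) - t) j = ∑ j, β j := by
  rw [sum_split h, sum_split h β, updV_fi, updV_fi1,
    rest_congr_updV h β _ _ (fun z => z)]
  ring

lemma ninv_swapVec (h : i + 1 < ℓ) (α : Fin ℓ → ℤ) (hasc : α (fidx h) < α (fidx1 h)) :
    ninv ℓ α = ninv ℓ (swapVec ℓ i α) + 1 := by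
  rw [swapVec_def h]
  exact ninv_swap h α hasc

lemma mult_swapVec (h : i + 1 < ℓ) (α : Fin ℓ → ℤ) : mult ℓ (swapVec ℓ i α) = mult ℓ α := by
  rw [swapVec_def h]
  exact mult_comp_perm _ α

lemma Fc_swapVec (h : i + 1 < ℓ) (α : Fin ℓ → ℤ) (x : ℤ) :
    Fc ℓ x (swapVec ℓ i α) = Fc ℓ x α := by
  rw [swapVec_def h]
  exact Fc_comp_perm _ α x

lemma sum_swapVec (h : i + 1 < ℓ) (α : Fin ℓ → ℤ) :
    ∑ j, swapVec ℓ i α j = ∑ j, α j := by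
  rw [swapVec_def h]
  exact sum_comp_perm _ α

lemma demMon_supp_prec (h : i + 1 < ℓ) (α : Fin ℓ → ℤ) (hasc : α (fidx h) < α (fidx1 h))
    (β : Fin ℓ → ℤ) (hβ : prec ℓ β (swapVec ℓ i α)) :
    ∀ γ ∈ (demMon h β).support, prec ℓ γ α := by
  intro γ hγ
  obtain ⟨t, rfl, hmin, hmax, hbranch⟩ := demMon_mem_supp h β hγ
  have hsumδ : ∑ j, swapVec ℓ i α j = ∑ j, α j := sum_swapVec h α
  have hFcδ : ∀ x, Fc ℓ x (swapVec ℓ i α) = Fc ℓ x α := Fc_swapVec h α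
  have hmultδ : mult ℓ (swapVec ℓ i α) = mult ℓ α := mult_swapVec h α
  have hninvδ : ninv ℓ α = ninv ℓ (swapVec ℓ i α) + 1 := ninv_swapVec h α hasc
  refine ⟨?_, ?_, ?_⟩
  · rw [sum_updV_eq h β t, hβ.1, hsumδ]
  · intro x
    exact le_trans (Fc_updV_le h β t hmin hmax x) (le_trans (hβ.2.1 x) (le_of_eq (hFcδ x)))
  · intro hm
    have hFcγα : ∀ x, Fc ℓ x (updV h β t (β (fidx h) + β (fidx1 h) - t)) = Fc ℓ x α :=
      Fc_eq_of_mult_eq hm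
    have hFcβα : ∀ x, Fc ℓ x β = Fc ℓ x α := fun x =>
      le_antisymm (le_trans (hβ.2.1 x) (le_of_eq (hFcδ x)))
        (by rw [← hFcγα x]; exact Fc_updV_le h β t hmin hmax x)
    have hmβα : mult ℓ β = mult ℓ α :=
      mult_eq_of_Fc_eq fun x => hFcβα x
    have hninvβ : ninv ℓ β < ninv ℓ (swapVec ℓ i α) := hβ.2.2 (hmβα.trans hmultδ.symm)
    have hmγβ : mult ℓ (updV h β t (β (fidx h) + β (fidx1 h) - t)) = mult ℓ β :=
      hm.trans hmβα.symm
    rcases mult_updV_cases h β t hmγβ with ht | ht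
    · have hγβ : updV h β t (β (fidx h) + β (fidx1 h) - t) = β := by
        rw [show β (fidx h) + β (fidx1 h) - t = β (fidx1 h) from by omega, ht, updV_self]
      rw [hγβ]
      omega
    · by_cases heq : β (fidx h) = β (fidx1 h)
      · have hγβ : updV h β t (β (fidx h) + β (fidx1 h) - t) = β := by
          rw [show β (fidx h) + β (fidx1 h) - t = β (fidx1 h) from by omega,
            show t = β (fidx h) from by omega, updV_self]
        rw [hγβ]
        omega
      · have hdesc : β (fidx1 h) < β (fidx h) := by
          rcases lt_trichotomy (β (fidx h)) (β (fidx1 h)) with hlt | he | hgt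
          · obtain ⟨h1', h2'⟩ := hbranch hlt
            omega
          · exact absurd he heq
          · exact hgt
        have hγsw : updV h β t (β (fidx h) + β (fidx1 h) - t) = swapVec ℓ i β := by
          rw [show β (fidx h) + β (fidx1 h) - t = β (fidx h) from by omega, ht,
            swapVec_eq_updV h]
        rw [hγsw]
        have hswasc : swapVec ℓ i β (fidx h) < swapVec ℓ i β (fidx1 h) := by
          rw [swapVec_fi h, swapVec_fi1 h]
          exact hdesc
        have := ninv_swapVec h (swapVec ℓ i β) hswasc
        rw [swapVec_invol] at this
        omega

lemma demMon_delta_supp (h : i + 1 < ℓ) (α : Fin ℓ → ℤ) (hasc : α (fidx h) < α (fidx1 h)) :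
    ∀ γ ∈ (demMon h (swapVec ℓ i α)).support, γ = α ∨ prec ℓ γ α := by
  intro γ hγ
  set δ := swapVec ℓ i α with hδ
  obtain ⟨t, rfl, hmin, hmax, hbranch⟩ := demMon_mem_supp h δ hγ
  have hδfi : δ (fidx h) = α (fidx1 h) := swapVec_fi h α
  have hδfi1 : δ (fidx1 h) = α (fidx h) := swapVec_fi1 h α
  have hsumδ : ∑ j, δ j = ∑ j, α j := sum_swapVec h α
  have hFcδ : ∀ x, Fc ℓ x δ = Fc ℓ x α := Fc_swapVec h α
  have hmultδ : mult ℓ δ = mult ℓ α := mult_swapVec h α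
  have hninvδ : ninv ℓ α = ninv ℓ δ + 1 := ninv_swapVec h α hasc
  by_cases ht0 : t = α (fidx h)
  · left
    rw [ht0, show δ (fidx h) + δ (fidx1 h) - α (fidx h) = δ (fidx h) from by omega]
    rw [show α (fidx h) = δ (fidx1 h) from hδfi1.symm]
    have : updV h δ (δ (fidx1 h)) (δ (fidx h)) = swapVec ℓ i δ := (swapVec_eq_updV h δ).symm
    rw [this, hδ, swapVec_invol]
  · right
    refine ⟨?_, ?_, ?_⟩
    · rw [sum_updV_eq h δ t, hsumδ]
    · intro x
      exact le_trans (Fc_updV_le h δ t hmin hmax x) (le_of_eq (hFcδ x))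
    · intro hm
      have hmγδ : mult ℓ (updV h δ t (δ (fidx h) + δ (fidx1 h) - t)) = mult ℓ δ :=
        hm.trans hmultδ.symm
      rcases mult_updV_cases h δ t hmγδ with ht | ht
      · have hγδ : updV h δ t (δ (fidx h) + δ (fidx1 h) - t) = δ := by
          rw [show δ (fidx h) + δ (fidx1 h) - t = δ (fidx1 h) from by omega, ht, updV_self]
        rw [hγδ]
        omega
      · exact absurd (ht.trans hδfi1) ht0

lemma demMon_delta_coeff (h : i + 1 < ℓ) (α : Fin ℓ → ℤ) (hasc : α (fidx h) < α (fidx1 h)) :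
    (demMon h (swapVec ℓ i α)) α = 1 := by
  classical
  set δ := swapVec ℓ i α with hδ
  have hδfi : δ (fidx h) = α (fidx1 h) := swapVec_fi h α
  have hδfi1 : δ (fidx1 h) = α (fidx h) := swapVec_fi1 h α
  have hdesc : δ (fidx1 h) ≤ δ (fidx h) := by omega
  rw [demMon, if_pos hdesc]
  rw [Finsupp.finset_sum_apply]
  have hval : ∀ t ∈ Finset.range ((δ (fidx h) - δ (fidx1 h)).toNat + 1),
      (Finsupp.single (updV h δ (δ (fidx1 h) + t) (δ (fidx h) - t)) (1 : ℤ)) α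
        = if t = 0 then 1 else 0 := by
    intro t _
    rw [Finsupp.single_apply]
    by_cases ht : t = 0
    · subst ht
      rw [if_pos rfl, if_pos]
      push_cast
      rw [add_zero, sub_zero]
      have : updV h δ (δ (fidx1 h)) (δ (fidx h)) = swapVec ℓ i δ := (swapVec_eq_updV h δ).symm
      rw [this, hδ, swapVec_invol]
    · rw [if_neg ht, if_neg]
      intro hcontra
      have := congrFun hcontra (fidx h)
      rw [updV_fi] at this
      rw [← hδfi1] at this
      have ht' : (t : ℤ) = 0 := by omega
      exact ht (by exact_mod_cast ht')
  rw [Finset.sum_congr rfl hval, Finset.sum_ite_eq' _ 0 (fun _ => (1:ℤ))]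
  rw [if_pos (Finset.mem_range.mpr (by omega))]

def DemL (h : i + 1 < ℓ) (c : L ℓ) : L ℓ := c.sum fun β k => k • demMon h β

lemma phi_DemL (h : i + 1 < ℓ) (c : L ℓ) : phi ℓ (DemL h c) = dem ℓ i (phi ℓ c) := by
  have hdemsum : ∀ (s : Finset (Fin ℓ → ℤ)) (f : (Fin ℓ → ℤ) → Kf ℓ),
      dem ℓ i (∑ β ∈ s, f β) = ∑ β ∈ s, dem ℓ i (f β) :=
    fun s f => map_sum (AddMonoidHom.mk' (dem ℓ i) (dem_add ℓ i)) f s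
  rw [DemL, map_finsuppSum, phi, Finsupp.linearCombination_apply, Finsupp.sum, Finsupp.sum,
    hdemsum]
  refine Finset.sum_congr rfl fun β _ => ?_
  show phi ℓ (c β • demMon h β) = dem ℓ i (c β • monK ℓ β)
  rw [map_smul, dem_zsmul, dem_monK h β]

lemma keyAux_triangular (n : ℕ) : ∀ α : Fin ℓ → ℤ, ∃ c : L ℓ,
    phi ℓ c = keyAux ℓ n α ∧ c α = 1 ∧ ∀ β ∈ c.support, β = α ∨ prec ℓ β α := by
  have base : ∀ α : Fin ℓ → ℤ, ∃ c : L ℓ,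
      phi ℓ c = monK ℓ α ∧ c α = 1 ∧ ∀ β ∈ c.support, β = α ∨ prec ℓ β α := by
    intro α
    refine ⟨Finsupp.single α 1, ?_, by simp, fun β hβ => ?_⟩
    · rw [phi_single, one_zsmul]
    · exact Or.inl (Finset.mem_singleton.mp (Finsupp.support_single_subset hβ))
  induction n with
  | zero => exact base
  | succ n ih =>
    intro α
    rw [keyAux]
    split
    · rename_i hex
      obtain ⟨hlt, hasc⟩ := hex.choose_spec
      set i0 : ℕ := (hex.choose : ℕ)
      have hasc' : α (fidx hlt) < α (fidx1 hlt) := hasc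
      obtain ⟨c, hc1, hc2, hc3⟩ := ih (swapVec ℓ i0 α)
      have hδsupp : swapVec ℓ i0 α ∈ c.support := by
        rw [Finsupp.mem_support_iff, hc2]
        exact one_ne_zero
      refine ⟨DemL hlt c, ?_, ?_, ?_⟩
      · rw [phi_DemL hlt c, hc1]
      · rw [DemL, Finsupp.sum_apply]
        rw [Finsupp.sum]
        rw [Finset.sum_eq_single (swapVec ℓ i0 α)]
        · rw [hc2, Finsupp.smul_apply, demMon_delta_coeff hlt α hasc', one_zsmul]
        · intro β hβ hne
          rcases hc3 β hβ with rfl | hprec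
          · exact absurd rfl hne
          · rw [Finsupp.smul_apply]
            have : α ∉ (demMon hlt β).support := fun hmem =>
              prec_irrefl α (demMon_supp_prec hlt α hasc' β hprec α hmem)
            rw [Finsupp.notMem_support_iff.mp this, smul_zero]
        · intro habs
          exact absurd hδsupp habs
      · intro β' hβ'
        have hsub := Finsupp.support_sum hβ'
        obtain ⟨β, hβ, hmem⟩ := Finset.mem_biUnion.mp hsub
        have hmem' : β' ∈ (demMon hlt β).support := Finsupp.support_smul hmem
        rcases hc3 β hβ with rfl | hprec
        · exact demMon_delta_supp hlt α hasc' β' hmem'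
        · exact Or.inr (demMon_supp_prec hlt α hasc' β hprec β' hmem')
    · exact base α

/-- A triangular expansion of the key polynomial `keyPoly ℓ α` in Laurent monomials. -/
noncomputable def keyC (ℓ : ℕ) (α : Fin ℓ → ℤ) : L ℓ :=
  Classical.choose (keyAux_triangular (ℓ * ℓ) α)

lemma keyC_spec (α : Fin ℓ → ℤ) :
    phi ℓ (keyC ℓ α) = keyPoly ℓ α ∧ (keyC ℓ α) α = 1 ∧
      ∀ β ∈ (keyC ℓ α).support, β = α ∨ prec ℓ β α :=
  Classical.choose_spec (keyAux_triangular (ℓ * ℓ) α)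

noncomputable def TL (ℓ : ℕ) : L ℓ →ₗ[ℤ] L ℓ := Finsupp.linearCombination ℤ (keyC ℓ)

lemma keyComb_eq_phi_TL (c : L ℓ) : keyComb ℓ c = phi ℓ (TL ℓ c) := by
  rw [TL, Finsupp.linearCombination_apply, map_finsuppSum, keyComb]
  refine Finsupp.sum_congr fun α _ => ?_
  rw [map_smul, (keyC_spec α).1]

lemma TL_injective (ℓ : ℕ) : Function.Injective (TL ℓ) := by
  have hzero : ∀ c : L ℓ, TL ℓ c = 0 → c = 0 := by
    intro c hc
    by_contra hne
    have hsupp : c.support.Nonempty := Finsupp.support_nonempty_iff.mpr hne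
    obtain ⟨α, hα, hmax⟩ := exists_maximal (fun a b => prec ℓ a b) prec_irrefl
      (fun hab hbc => prec_trans hab hbc) c.support hsupp
    have : (TL ℓ c) α = c α := by
      rw [TL, Finsupp.linearCombination_apply, Finsupp.sum_apply, Finsupp.sum]
      rw [Finset.sum_eq_single α]
      · rw [Finsupp.smul_apply, (keyC_spec α).2.1, smul_eq_mul, mul_one]
      · intro β hβ hne'
        rw [Finsupp.smul_apply]
        have : α ∉ (keyC ℓ β).support := by
          intro hmem
          rcases (keyC_spec β).2.2 α hmem with rfl | hprec
          · exact hne' rfl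
          · exact hmax β hβ hprec
        rw [Finsupp.notMem_support_iff.mp this, smul_zero]
      · intro habs
        exact absurd hα habs
    rw [hc] at this
    exact Finsupp.mem_support_iff.mp hα this.symm
  intro a b hab
  have : TL ℓ (a - b) = 0 := by rw [map_sub, hab, sub_self]
  exact sub_eq_zero.mp (hzero _ this)

lemma single_mem_range_TL (α : Fin ℓ → ℤ) :
    Finsupp.single α (1 : ℤ) ∈ LinearMap.range (TL ℓ) := by
  classical
  have hmain : ∀ n : ℕ, ∀ α : Fin ℓ → ℤ, ((prec_finite α).toFinset).card ≤ n →
      Finsupp.single α (1 : ℤ) ∈ LinearMap.range (TL ℓ) := by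
    intro n
    induction n with
    | zero =>
      intro α hcard
      have hzero : (prec_finite α).toFinset = ∅ := Finset.card_eq_zero.mp (le_antisymm hcard (Nat.zero_le _))
      have hTL : TL ℓ (Finsupp.single α 1) = keyC ℓ α := by
        rw [TL, Finsupp.linearCombination_single, one_zsmul]
      have hKC : keyC ℓ α = Finsupp.single α 1 := by
        refine Finsupp.ext fun β => ?_
        by_cases hβ : β = α
        · subst hβ
          rw [(keyC_spec β).2.1, Finsupp.single_eq_same]
        · rw [Finsupp.single_eq_of_ne' (Ne.symm hβ)]
          by_cases hmem : β ∈ (keyC ℓ α).support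
          · rcases (keyC_spec α).2.2 β hmem with h1 | h1
            · exact absurd h1 hβ
            · exfalso
              have : β ∈ (prec_finite α).toFinset := (prec_finite α).mem_toFinset.mpr h1
              rw [hzero] at this
              exact absurd this (Finset.notMem_empty β)
          · exact Finsupp.notMem_support_iff.mp hmem
      exact ⟨Finsupp.single α 1, by rw [hTL, hKC]⟩
    | succ n ih =>
      intro α hcard
      have hrest : keyC ℓ α - Finsupp.single α 1 ∈ LinearMap.range (TL ℓ) := by
        set d := keyC ℓ α - Finsupp.single α 1 with hd
        have hdsupp : ∀ β ∈ d.support, prec ℓ β α := by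
          intro β hβ
          have hne : d β ≠ 0 := Finsupp.mem_support_iff.mp hβ
          by_cases hβα : β = α
          · exfalso
            apply hne
            rw [hd, Finsupp.sub_apply, hβα, (keyC_spec α).2.1, Finsupp.single_eq_same, sub_self]
          · have hkc : (keyC ℓ α) β ≠ 0 := by
              intro hzero
              apply hne
              rw [hd, Finsupp.sub_apply, hzero, Finsupp.single_eq_of_ne' (Ne.symm hβα), sub_self]
            rcases (keyC_spec α).2.2 β (Finsupp.mem_support_iff.mpr hkc) with h1 | h1
            · exact absurd h1 hβα
            · exact h1
        have hds : (d.sum fun β k => k • Finsupp.single β (1 : ℤ)) = d := by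
          calc (d.sum fun β k => k • Finsupp.single β (1 : ℤ))
              = d.sum fun β k => Finsupp.single β k :=
                Finsupp.sum_congr fun β _ => by rw [Finsupp.smul_single, smul_eq_mul, mul_one]
            _ = d := Finsupp.sum_single d
        rw [← hds]
        refine Submodule.finsuppSum_mem _ _ _ _ fun β hβ => ?_
        refine Submodule.smul_mem _ _ ?_
        have hprec : prec ℓ β α := hdsupp β (Finsupp.mem_support_iff.mpr hβ)
        refine ih β ?_
        have hss : (prec_finite β).toFinset ⊂ (prec_finite α).toFinset := by
          refine Finset.ssubset_iff_of_subset ?_ |>.mpr ?_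
          · intro γ hγ
            rw [Set.Finite.mem_toFinset] at hγ ⊢
            exact prec_trans hγ hprec
          · exact ⟨β, (prec_finite α).mem_toFinset.mpr hprec,
              fun hc => prec_irrefl β ((prec_finite β).mem_toFinset.mp hc)⟩
        have := Finset.card_lt_card hss
        omega
      have hTL : TL ℓ (Finsupp.single α 1) = keyC ℓ α := by
        rw [TL, Finsupp.linearCombination_single, one_zsmul]
      have hkc : keyC ℓ α ∈ LinearMap.range (TL ℓ) := ⟨Finsupp.single α 1, hTL⟩
      have : Finsupp.single α (1 : ℤ) = keyC ℓ α - (keyC ℓ α - Finsupp.single α 1) :=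
        (sub_sub_cancel _ _).symm
      rw [this]
      exact Submodule.sub_mem _ hkc hrest
  exact hmain _ α le_rfl

lemma TL_surjective (ℓ : ℕ) : Function.Surjective (TL ℓ) := by
  intro d
  have : d ∈ LinearMap.range (TL ℓ) := by
    induction d using Finsupp.induction with
    | zero => exact Submodule.zero_mem _
    | single_add a b f _ _ ihf =>
      refine Submodule.add_mem _ ?_ ihf
      have : Finsupp.single a b = b • Finsupp.single a (1 : ℤ) := by
        rw [Finsupp.smul_single, smul_eq_mul, mul_one]
      rw [this]
      exact Submodule.smul_mem _ _ (single_mem_range_TL a)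
  exact this

lemma keyComb_injective (ℓ : ℕ) : Function.Injective (keyComb ℓ) := by
  intro a b hab
  rw [keyComb_eq_phi_TL, keyComb_eq_phi_TL] at hab
  exact TL_injective ℓ (phi_injective ℓ hab)

lemma exists_keyComb_of_phi (d : L ℓ) : ∃ c, keyComb ℓ c = phi ℓ d := by
  obtain ⟨c, hc⟩ := TL_surjective ℓ d
  exact ⟨c, by rw [keyComb_eq_phi_TL, hc]⟩

lemma polyTrunc_keyComb (c : L ℓ) : polyTrunc ℓ (keyComb ℓ c) = keyCombPos ℓ c := by
  have hex : ∃ c', keyComb ℓ c' = keyComb ℓ c := ⟨c, rfl⟩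
  rw [polyTrunc, dif_pos hex, keyComb_injective ℓ hex.choose_spec]

lemma keyComb_add (c c' : L ℓ) : keyComb ℓ (c + c') = keyComb ℓ c + keyComb ℓ c' := by
  rw [keyComb_eq_phi_TL, keyComb_eq_phi_TL, keyComb_eq_phi_TL, map_add, map_add]

lemma keyCombPos_add (c c' : L ℓ) :
    keyCombPos ℓ (c + c') = keyCombPos ℓ c + keyCombPos ℓ c' := by
  rw [keyCombPos, keyCombPos, keyCombPos]
  refine Finsupp.sum_add_index ?_ ?_
  · intro α _
    split_ifs
    · exact zero_zsmul _
    · rfl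
  · intro α _ k1 k2
    split_ifs
    · exact add_zsmul _ _ _
    · exact (add_zero (0 : Kf ℓ)).symm

lemma demWord_add (w : List ℕ) (f g : Kf ℓ) :
    demWord ℓ w (f + g) = demWord ℓ w f + demWord ℓ w g := by
  induction w with
  | nil => rfl
  | cons a w ih =>
    show dem ℓ a (demWord ℓ w (f + g)) = dem ℓ a (demWord ℓ w f) + dem ℓ a (demWord ℓ w g)
    rw [ih, dem_add]

lemma main_add (w : List ℕ) (A B : Kf ℓ) (hA : ∃ c, keyComb ℓ c = A)
    (hB : ∃ c, keyComb ℓ c = B) :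
    demWord ℓ w (polyTrunc ℓ (A + B))
      = demWord ℓ w (polyTrunc ℓ A) + demWord ℓ w (polyTrunc ℓ B) := by
  obtain ⟨cA, rfl⟩ := hA
  obtain ⟨cB, rfl⟩ := hB
  rw [← keyComb_add, polyTrunc_keyComb, polyTrunc_keyComb, polyTrunc_keyComb,
    keyCombPos_add, demWord_add]

end SwapD

section Series

def epsv (ℓ : ℕ) (a : Fin ℓ × Fin ℓ) (k : ℤ) : Fin ℓ → ℤ :=
  fun j => if j = a.1 then k else if j = a.2 then -k else 0

lemma monK_epsv (a : Fin ℓ × Fin ℓ) (hne : a.1 ≠ a.2) (k : ℤ) :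
    monK ℓ (epsv ℓ a k) = Xv ℓ (a.1 : ℕ) ^ k * Xv ℓ (a.2 : ℕ) ^ (-k) := by
  classical
  rw [monK, ← Finset.mul_prod_erase _ _ (Finset.mem_univ a.1),
    ← Finset.mul_prod_erase _ _ (Finset.mem_erase.mpr ⟨hne.symm, Finset.mem_univ a.2⟩)]
  have h1 : epsv ℓ a k a.1 = k := by rw [epsv, if_pos rfl]
  have h2 : epsv ℓ a k a.2 = -k := by rw [epsv, if_neg hne.symm, if_pos rfl]
  rw [h1, h2]
  have h3 : ∏ j ∈ (Finset.univ.erase a.1).erase a.2, Xv ℓ (j : ℕ) ^ epsv ℓ a k j = 1 := by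
    refine Finset.prod_eq_one fun j hj => ?_
    obtain ⟨hj2, hj1, -⟩ : j ≠ a.2 ∧ j ≠ a.1 ∧ j ∈ Finset.univ := by
      simpa [Finset.mem_erase] using hj
    rw [epsv, if_neg hj1, if_neg hj2, zpow_zero]
  rw [h3, mul_one]

lemma div_pow_monK (a : Fin ℓ × Fin ℓ) (hne : a.1 ≠ a.2) (k : ℕ) :
    (Xv ℓ (a.1 : ℕ) / Xv ℓ (a.2 : ℕ)) ^ k = monK ℓ (epsv ℓ a k) := by
  rw [monK_epsv a hne, div_pow, ← zpow_natCast (Xv ℓ (a.1 : ℕ)) k,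
    ← zpow_natCast (Xv ℓ (a.2 : ℕ)) k, zpow_neg, div_eq_mul_inv]

lemma one_mem_rphi : (1 : Kf ℓ) ∈ LinearMap.range (phi ℓ) := by
  refine ⟨Finsupp.single 0 1, ?_⟩
  rw [phi_single, one_zsmul, monK]
  refine Finset.prod_eq_one fun j _ => ?_
  rw [Pi.zero_apply, zpow_zero]

lemma mul_monK_mem {f : Kf ℓ} (hf : f ∈ LinearMap.range (phi ℓ)) (v : Fin ℓ → ℤ) :
    f * monK ℓ v ∈ LinearMap.range (phi ℓ) := by
  obtain ⟨c, rfl⟩ := hf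
  refine ⟨c.sum fun β k => Finsupp.single (β + v) k, ?_⟩
  rw [map_finsuppSum]
  rw [phi, Finsupp.linearCombination_apply, Finsupp.sum, Finsupp.sum, Finset.sum_mul]
  refine Finset.sum_congr rfl fun β _ => ?_
  show phi ℓ (Finsupp.single (β + v) (c β)) = c β • monK ℓ β * monK ℓ v
  rw [phi_single, monK_add, smul_mul_assoc]

lemma coeff_prod_mem (Ψ : Finset (Fin ℓ × Fin ℓ)) (hne : ∀ p ∈ Ψ, p.1 ≠ p.2) (n : ℕ) :
    PowerSeries.coeff n
      (∏ p ∈ Ψ, PowerSeries.mk fun m => (Xv ℓ (p.1 : ℕ) / Xv ℓ (p.2 : ℕ)) ^ m)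
      ∈ LinearMap.range (phi ℓ) := by
  classical
  induction Ψ using Finset.induction generalizing n with
  | empty =>
    rw [Finset.prod_empty, PowerSeries.coeff_one]
    split_ifs
    · exact one_mem_rphi
    · exact Submodule.zero_mem _
  | @insert a s ha ih =>
    rw [Finset.prod_insert ha, PowerSeries.coeff_mul]
    refine Submodule.sum_mem _ fun q hq => ?_
    rw [PowerSeries.coeff_mk]
    have hane : a.1 ≠ a.2 := hne a (Finset.mem_insert_self a s)
    rw [div_pow_monK a hane, mul_comm]
    exact mul_monK_mem (ih (fun p hp => hne p (Finset.mem_insert_of_mem hp)) q.2) _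

lemma coeff_catSeries_exists (Ψ : Finset (Fin ℓ × Fin ℓ)) (hne : ∀ p ∈ Ψ, p.1 ≠ p.2)
    (γ : Fin ℓ → ℤ) (n : ℕ) :
    ∃ c, keyComb ℓ c = PowerSeries.coeff n (catSeries ℓ Ψ γ) := by
  have hmem : PowerSeries.coeff n (catSeries ℓ Ψ γ) ∈ LinearMap.range (phi ℓ) := by
    rw [catSeries, PowerSeries.coeff_mul_C]
    exact mul_monK_mem (coeff_prod_mem Ψ hne n) γ
  obtain ⟨d, hd⟩ := hmem
  rw [← hd]
  exact exists_keyComb_of_phi d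

lemma catSeries_split (Ψ : Finset (Fin ℓ × Fin ℓ)) (a : Fin ℓ × Fin ℓ) (ha : a ∈ Ψ)
    (hne : a.1 ≠ a.2) (γ : Fin ℓ → ℤ) :
    catSeries ℓ Ψ γ = catSeries ℓ (Ψ.erase a) γ
      + PowerSeries.X * catSeries ℓ Ψ
          (fun k => γ k + (Pi.single a.1 1 : Fin ℓ → ℤ) k -
            (Pi.single a.2 1 : Fin ℓ → ℤ) k) := by
  classical
  set r := Xv ℓ (a.1 : ℕ) / Xv ℓ (a.2 : ℕ) with hr
  have hGa : (PowerSeries.mk fun m => r ^ m)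
      = 1 + PowerSeries.X * (PowerSeries.C r * PowerSeries.mk fun m => r ^ m) := by
    ext n
    cases n with
    | zero =>
      rw [map_add, PowerSeries.coeff_zero_X_mul, PowerSeries.coeff_mk, pow_zero,
        add_zero, PowerSeries.coeff_one, if_pos rfl]
    | succ n =>
      rw [map_add, PowerSeries.coeff_succ_X_mul, PowerSeries.coeff_C_mul,
        PowerSeries.coeff_mk, PowerSeries.coeff_mk, PowerSeries.coeff_one,
        if_neg (Nat.succ_ne_zero n), zero_add, pow_succ']
  have hγ' : monK ℓ (fun k => γ k + (Pi.single a.1 1 : Fin ℓ → ℤ) k -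
      (Pi.single a.2 1 : Fin ℓ → ℤ) k) = r * monK ℓ γ := by
    have hfun : (fun k => γ k + (Pi.single a.1 1 : Fin ℓ → ℤ) k -
        (Pi.single a.2 1 : Fin ℓ → ℤ) k) = γ + epsv ℓ a 1 := by
      funext k
      rw [Pi.add_apply, epsv, Pi.single_apply, Pi.single_apply]
      by_cases h1 : k = a.1
      · rw [if_pos h1, if_pos h1, if_neg (h1 ▸ hne)]
        ring
      · rw [if_neg h1, if_neg h1]
        by_cases h2 : k = a.2
        · rw [if_pos h2, if_pos h2]
          ring
        · rw [if_neg h2, if_neg h2]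
          ring
    have h5 : monK ℓ (epsv ℓ a (1 : ℤ)) = r := by
      rw [congrArg (epsv ℓ a) (show (1 : ℤ) = ((1 : ℕ) : ℤ) by norm_num),
        ← div_pow_monK a hne 1, pow_one]
    rw [hfun, monK_add, h5, mul_comm]
  rw [catSeries, catSeries, catSeries, ← Finset.mul_prod_erase _ _ ha, hγ', map_mul]
  conv_lhs => rw [hGa]
  ring

end Series


end NSCat


/-- The removable-root recurrence for nonsymmetric Catalan
functions: if `Ψ ⊆ Δ⁺_ℓ` is a root ideal, `a` a removable root of `Ψ` (i.e.
`a ∈ Ψ` with `Ψ \ {a}` still a root ideal), `γ ∈ ℤ^ℓ` and `w` a word in the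
0-Hecke monoid of `S_ℓ`, then
`H(Ψ; γ; w) = H(Ψ \ {a}; γ; w) + q · H(Ψ; γ + ε_a; w)`,
where `ε_{(i,j)} = e_i - e_j`. -/
theorem HCat_removable_root (ℓ : ℕ) (Ψ : Finset (Fin ℓ × Fin ℓ))
    (hΨ : IsRootIdeal ℓ Ψ) (a : Fin ℓ × Fin ℓ) (ha : a ∈ Ψ)
    (hrem : IsRootIdeal ℓ (Ψ.erase a)) (γ : Fin ℓ → ℤ)
    (w : List ℕ) (hw : ∀ i ∈ w, i + 1 < ℓ) :
    HCat ℓ Ψ γ w =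
      HCat ℓ (Ψ.erase a) γ w +
        PowerSeries.X *
          HCat ℓ Ψ
            (fun k => γ k + (Pi.single a.1 1 : Fin ℓ → ℤ) k -
              (Pi.single a.2 1 : Fin ℓ → ℤ) k) w := by
  classical
  have ha12 : a.1 ≠ a.2 := ne_of_lt (hΨ.1 a ha)
  have hneΨ : ∀ p ∈ Ψ, p.1 ≠ p.2 := fun p hp => ne_of_lt (hΨ.1 p hp)
  have hneE : ∀ p ∈ Ψ.erase a, p.1 ≠ p.2 := fun p hp => hneΨ p (Finset.mem_of_mem_erase hp)
  have hsplit := NSCat.catSeries_split Ψ a ha ha12 γ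
  refine PowerSeries.ext fun n => ?_
  rw [map_add, HCat, HCat, HCat, PowerSeries.coeff_mk, PowerSeries.coeff_mk, hsplit, map_add]
  cases n with
  | zero =>
    rw [PowerSeries.coeff_zero_X_mul, PowerSeries.coeff_zero_X_mul, add_zero, add_zero]
  | succ n =>
    rw [PowerSeries.coeff_succ_X_mul, PowerSeries.coeff_succ_X_mul, PowerSeries.coeff_mk]
    exact NSCat.main_add w _ _
      (NSCat.coeff_catSeries_exists (Ψ.erase a) hneE γ (n + 1))
      (NSCat.coeff_catSeries_exists Ψ hneΨ _ n)
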